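/- Let G be a finitely generated abelian group (written additively), let x ∈ G be an element of finite order n, and let c, d be positive integers. Then there exists a group automorphism φ: G → G with φ(c·x) = d·x if and only if gcd(c, n) = gcd(d, n). -/

import Mathlib

private lemma nsmul_eq_nsmul_of_modEq_aux {T : Type*} [AddCommGroup T] {t : T} {E j k : ℕ}
    (hE : E • t = 0) (h : j ≡ k [MOD E]) : j • t = k • t := by
  rw [nsmul_eq_nsmul_iff_modEq]
  exact h.of_dvd (addOrderOf_dvd_of_nsmul_eq_zero hE)

/-- Key lemma: in a f.g. abelian group, if `a` is coprime to the (finite) order of `y`,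
there is an automorphism sending `y` to `a • y`. -/
private lemma exists_addAut_nsmul (G : Type*) [AddCommGroup G] (hG : AddGroup.FG G)
    (y : G) (hy : 0 < addOrderOf y) (a : ℕ) (ha : Nat.Coprime a (addOrderOf y)) :
    ∃ φ : G ≃+ G, φ y = a • y := by
  classical
  obtain ⟨r, ι, fι, p, hp, e, ⟨f⟩⟩ := AddCommGroup.equiv_free_prod_directSum_zmod G
  set m := addOrderOf y with hm
  set E : ℕ := ∏ i, p i ^ e i with hE
  have hEpos : 0 < E := Finset.prod_pos fun i _ => pow_pos (hp i).pos _
  set N : ℕ := Nat.lcm E m with hN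
  have hNpos : 0 < N := Nat.lcm_pos hEpos hy
  haveI : NeZero N := ⟨hNpos.ne'⟩
  have hmN : m ∣ N := Nat.dvd_lcm_right _ _
  have hEN : E ∣ N := Nat.dvd_lcm_left _ _
  -- every element of the torsion part is killed by N
  have hkill : ∀ t : DirectSum ι fun i => ZMod (p i ^ e i), N • t = 0 := by
    intro t
    induction t using DirectSum.induction_on with
    | zero => simp
    | of i z =>
        have hq : (p i ^ e i : ℕ) ∣ N :=
          (Finset.dvd_prod_of_mem _ (Finset.mem_univ i)).trans hEN
        have hz : N • z = 0 := by
          rw [nsmul_eq_mul,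
            show ((N : ℕ) : ZMod (p i ^ e i)) = 0 from
              (ZMod.natCast_eq_zero_iff _ _).mpr hq, zero_mul]
        rw [← map_nsmul, hz, map_zero]
    | add s t hs ht => rw [smul_add, hs, ht, add_zero]
  -- lift `a` to a unit mod `N`
  obtain ⟨u, hu⟩ := ZMod.unitsMap_surjective hmN (ZMod.unitOfCoprime a ha)
  set a' : ℕ := (u : ZMod N).val with ha'
  set b : ℕ := ((u⁻¹ : (ZMod N)ˣ) : ZMod N).val with hb
  have hab : a' * b ≡ 1 [MOD N] := by
    rw [← ZMod.natCast_eq_natCast_iff]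
    push_cast
    rw [ZMod.natCast_val, ZMod.natCast_val, ZMod.cast_id, ZMod.cast_id]
    exact_mod_cast u.mul_inv
  have hba : b * a' ≡ 1 [MOD N] := by rwa [mul_comm] at hab
  have ham : a' ≡ a [MOD m] := by
    rw [← ZMod.natCast_eq_natCast_iff]
    have h1 : (ZMod.castHom hmN (ZMod m)) ((u : (ZMod N)ˣ) : ZMod N) = (a : ZMod m) := by
      have h2 := congrArg Units.val hu
      rw [ZMod.unitsMap_def] at h2
      simpa using h2
    calc (a' : ZMod m) = ZMod.castHom hmN (ZMod m) ((a' : ZMod N)) := (map_natCast _ _).symm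
      _ = ZMod.castHom hmN (ZMod m) ((u : (ZMod N)ˣ) : ZMod N) := by
          rw [ha', ZMod.natCast_val, ZMod.cast_id]
      _ = (a : ZMod m) := h1
  -- the automorphism on the torsion part: multiplication by a'
  set T := DirectSum ι fun i => ZMod (p i ^ e i) with hT
  have key : ∀ (j k : ℕ), j ≡ k [MOD N] → ∀ t : T, j • t = k • t := fun j k h t =>
    nsmul_eq_nsmul_of_modEq_aux (hkill t) h
  set ψ : T ≃+ T :=
    { toFun := fun t => a' • t
      invFun := fun t => b • t
      left_inv := fun t => by
        show b • a' • t = t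
        rw [← mul_nsmul', key _ 1 hba t, one_nsmul]
      right_inv := fun t => by
        show a' • b • t = t
        rw [← mul_nsmul', key _ 1 hab t, one_nsmul]
      map_add' := fun s t => nsmul_add s t a' } with hψ
  set φ : G ≃+ G := (f.trans ((AddEquiv.refl (Fin r →₀ ℤ)).prodCongr ψ)).trans f.symm with hφ
  refine ⟨φ, ?_⟩
  -- the free component of f y vanishes
  have hmy : m • y = 0 := addOrderOf_nsmul_eq_zero y
  have hfy : m • (f y) = 0 := by rw [← map_nsmul, hmy, map_zero]
  have hfy1 : (f y).1 = 0 := by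
    have h1 : (m : ℤ) • (f y).1 = 0 := by
      rw [Nat.cast_smul_eq_nsmul]
      exact congrArg Prod.fst hfy
    rcases smul_eq_zero.mp h1 with h | h
    · exact absurd (Nat.cast_eq_zero.mp h) hy.ne'
    · exact h
  have step : ((AddEquiv.refl (Fin r →₀ ℤ)).prodCongr ψ) (f y) = a' • (f y) := by
    apply Prod.ext
    · simp [AddEquiv.prodCongr, hfy1]
    · simp [AddEquiv.prodCongr, hψ]
  have : φ y = a' • y := by
    rw [hφ]
    simp only [AddEquiv.trans_apply]
    rw [step, map_nsmul, f.symm_apply_apply]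
  rw [this]
  exact nsmul_eq_nsmul_of_modEq_aux hmy ham

theorem exists_addAut_smul_eq_iff (G : Type*) [AddCommGroup G] (hG : AddGroup.FG G)
    (x : G) (n : ℕ) (hn : 0 < n) (hx : addOrderOf x = n)
    (c d : ℕ) (hc : 0 < c) (hd : 0 < d) :
    (∃ φ : G ≃+ G, φ (c • x) = d • x) ↔ Nat.gcd c n = Nat.gcd d n := by
  have hfin : IsOfFinAddOrder x := by rw [← addOrderOf_pos_iff, hx]; exact hn
  constructor
  · rintro ⟨φ, hφ⟩
    have h1 : addOrderOf (c • x) = addOrderOf (d • x) := by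
      rw [← hφ, AddEquiv.addOrderOf_eq]
    rw [addOrderOf_nsmul' x hc.ne', addOrderOf_nsmul' x hd.ne', hx] at h1
    have hc' : Nat.gcd n c ∣ n := Nat.gcd_dvd_left n c
    have hd' : Nat.gcd n d ∣ n := Nat.gcd_dvd_left n d
    have := congrArg (fun t => n / t) h1
    simp only [Nat.div_div_self hc' hn.ne', Nat.div_div_self hd' hn.ne'] at this
    rw [Nat.gcd_comm c n, Nat.gcd_comm d n]
    exact this
  · intro h
    set g := Nat.gcd c n with hg
    have hgpos : 0 < g := Nat.gcd_pos_of_pos_left n hc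
    have hgn : g ∣ n := Nat.gcd_dvd_right c n
    have hgc : g ∣ c := Nat.gcd_dvd_left c n
    have hgd : g ∣ d := h ▸ Nat.gcd_dvd_left d n
    set y := g • x with hy
    have hyo : addOrderOf y = n / g := by
      rw [hy, addOrderOf_nsmul' x hgpos.ne', hx, Nat.gcd_comm, hg, Nat.gcd_gcd_self_left_right]
    have hyopos : 0 < addOrderOf y := by
      rw [hyo]; exact Nat.div_pos (Nat.le_of_dvd hn hgn) hgpos
    have hcop_c : Nat.Coprime (c / g) (addOrderOf y) := by
      rw [hyo, hg]; exact Nat.coprime_div_gcd_div_gcd hgpos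
    have hcop_d : Nat.Coprime (d / g) (addOrderOf y) := by
      rw [hyo]
      have h2 := Nat.coprime_div_gcd_div_gcd (m := d) (n := n) (h ▸ hgpos)
      rwa [← h] at h2
    obtain ⟨φ₁, hφ₁⟩ := exists_addAut_nsmul G hG y hyopos (c / g) hcop_c
    obtain ⟨φ₂, hφ₂⟩ := exists_addAut_nsmul G hG y hyopos (d / g) hcop_d
    have hcy : (c / g) • y = c • x := by
      rw [hy, ← mul_nsmul', Nat.div_mul_cancel hgc]
    have hdy : (d / g) • y = d • x := by
      rw [hy, ← mul_nsmul', Nat.div_mul_cancel hgd]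
    refine ⟨φ₁.symm.trans φ₂, ?_⟩
    rw [AddEquiv.trans_apply, ← hcy, ← hφ₁, φ₁.symm_apply_apply, hφ₂, hdy]
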